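/- Let p, n ≥ 1, let x₁, …, xₙ, x ∈ ℝ^p, let w₁, …, wₙ ≥ 0, and let ε > 0 with n_{w,ε} = Σᵢ wᵢ + ε > 1. Define μ_{w,ε} = (1/n_{w,ε})(Σᵢ wᵢ xᵢ + ε x), the (n+1)×p matrix X_{w,ε} with i-th row √wᵢ (xᵢ − μ_{w,ε})ᵀ for i ≤ n and last row √ε (x − μ_{w,ε})ᵀ, the vector y_{w,ε} = e_{n+1} ∈ ℝ^{n+1}, and Σ_{w,ε} = (1/(n_{w,ε} − 1)) X_{w,ε}ᵀ X_{w,ε}. Assume Σ_{w,ε} is invertible. Then the function β ↦ ‖y_{w,ε} − X_{w,ε} β‖² on ℝ^p has a unique global minimizer, given by θ_ε = (√ε / (n_{w,ε} − 1)) Σ_{w,ε}⁻¹ (x − μ_{w,ε}). -/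

import Mathlib

open Matrix

/-- The augmented least-squares problem `β ↦ ‖y_{w,ε} − X_{w,ε} β‖²` has a
unique global minimizer, given in closed form by
`θ_ε = (√ε / (n_{w,ε} − 1)) Σ_{w,ε}⁻¹ (x − μ_{w,ε})`. -/
theorem augmented_least_squares_unique_minimizer (p n : ℕ) (hp : 1 ≤ p) (hn : 1 ≤ n)
    (xs : Fin n → Fin p → ℝ) (x : Fin p → ℝ) (w : Fin n → ℝ) (hw : ∀ i, 0 ≤ w i)
    (ε : ℝ) (hε : 0 < ε) (hnwε : 1 < ∑ i, w i + ε)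
    (μ : Fin p → ℝ)
    (hμ : μ = (1 / (∑ i, w i + ε)) • (∑ i, w i • xs i + ε • x))
    (X : Matrix (Fin (n + 1)) (Fin p) ℝ)
    (hX : X = Matrix.of fun i j =>
      Fin.lastCases (Real.sqrt ε * (x j - μ j))
        (fun k => Real.sqrt (w k) * (xs k j - μ j)) i)
    (y : Fin (n + 1) → ℝ) (hy : y = Pi.single (Fin.last n) 1)
    (Swε : Matrix (Fin p) (Fin p) ℝ)
    (hSwε : Swε = (1 / (∑ i, w i + ε - 1)) • (Xᵀ * X))
    (hSinv : IsUnit Swε)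
    (θ : Fin p → ℝ)
    (hθ : θ = (Real.sqrt ε / (∑ i, w i + ε - 1)) • (Swε⁻¹ *ᵥ (x - μ))) :
    ∀ β : Fin p → ℝ, β ≠ θ →
      (y - X *ᵥ θ) ⬝ᵥ (y - X *ᵥ θ) < (y - X *ᵥ β) ⬝ᵥ (y - X *ᵥ β) := by
  intro β hβ
  set c : ℝ := ∑ i, w i + ε with hc
  have hc1 : c - 1 ≠ 0 := by linarith
  -- A = XᵀX and its relation to Swε
  have hA : Xᵀ * X = (c - 1) • Swε := by
    rw [hSwε, smul_smul, mul_one_div, div_self hc1, one_smul]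
  -- Xᵀ *ᵥ y = √ε • (x - μ)
  have hXty : Xᵀ *ᵥ y = Real.sqrt ε • (x - μ) := by
    funext j
    simp only [mulVec, dotProduct, transpose_apply, hy, hX]
    rw [Finset.sum_eq_single (Fin.last n)]
    · simp [Fin.lastCases_last]
    · intro i _ hi
      simp [Pi.single_eq_of_ne hi]
    · simp
  -- normal equations: (XᵀX) *ᵥ θ = Xᵀ *ᵥ y
  have hnormal : (Xᵀ * X) *ᵥ θ = Xᵀ *ᵥ y := by
    rw [hA, hθ, hXty]
    rw [mulVec_smul, smul_mulVec, mulVec_mulVec,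
      Matrix.mul_nonsing_inv _ (Matrix.isUnit_iff_isUnit_det _ |>.mp hSinv),
      one_mulVec, smul_smul]
    rw [div_mul_cancel₀ _ hc1]
  -- orthogonality
  have horth : Xᵀ *ᵥ (y - X *ᵥ θ) = 0 := by
    rw [mulVec_sub, mulVec_mulVec, hnormal, sub_self]
  -- injectivity of X
  have hXinj : ∀ d : Fin p → ℝ, X *ᵥ d = 0 → d = 0 := by
    intro d hd
    have hAunit : IsUnit (Xᵀ * X) := by
      rw [hA]
      rw [Matrix.isUnit_iff_isUnit_det, Matrix.det_smul, isUnit_iff_ne_zero]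
      have : Swε.det ≠ 0 := by
        have := Matrix.isUnit_iff_isUnit_det _ |>.mp hSinv
        simpa [isUnit_iff_ne_zero] using this
      positivity
    have hinj := Matrix.mulVec_injective_iff_isUnit.mpr hAunit
    have : (Xᵀ * X) *ᵥ d = (Xᵀ * X) *ᵥ 0 := by
      rw [← mulVec_mulVec, hd, mulVec_zero, mulVec_zero]
    exact hinj this
  -- expansion
  set d : Fin p → ℝ := β - θ with hd
  have hdne : d ≠ 0 := sub_ne_zero.mpr hβ
  have hXd : X *ᵥ d ≠ 0 := fun h => hdne (hXinj d h)
  have hcross : (y - X *ᵥ θ) ⬝ᵥ (X *ᵥ d) = 0 := by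
    rw [dotProduct_mulVec, ← mulVec_transpose, horth, zero_dotProduct]
  have hsplit : y - X *ᵥ β = (y - X *ᵥ θ) - X *ᵥ d := by
    rw [hd, mulVec_sub]
    abel
  have hpos : 0 < (X *ᵥ d) ⬝ᵥ (X *ᵥ d) := by
    rcases lt_or_eq_of_le (Finset.sum_nonneg fun i _ => mul_self_nonneg ((X *ᵥ d) i) :
        (0:ℝ) ≤ (X *ᵥ d) ⬝ᵥ (X *ᵥ d)) with h | h
    · exact h
    · exact absurd (dotProduct_self_eq_zero.mp h.symm) hXd
  rw [hsplit]
  have hexp : (y - X *ᵥ θ - X *ᵥ d) ⬝ᵥ (y - X *ᵥ θ - X *ᵥ d)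
      = (y - X *ᵥ θ) ⬝ᵥ (y - X *ᵥ θ) - (y - X *ᵥ θ) ⬝ᵥ (X *ᵥ d)
        - (X *ᵥ d) ⬝ᵥ (y - X *ᵥ θ) + (X *ᵥ d) ⬝ᵥ (X *ᵥ d) := by
    simp only [sub_dotProduct, dotProduct_sub]
    ring
  have hcross' : (X *ᵥ d) ⬝ᵥ (y - X *ᵥ θ) = 0 := by
    rw [dotProduct_comm]; exact hcross
  rw [hexp, hcross, hcross']
  linarith
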